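/- arXiv:2107.08428 — 2 statements merged into one kernel-verified Lean document; each statement's English description precedes it below -/
import Mathlib

section
/- Let V be a locally finite game graph and x ∈ V. Then either 𝒢ₙ(x) = ∞ for all n, or there exist m ∈ ℕ and n₀ ∈ ℕ such that 𝒢ₙ(x) = ∞ for all n < n₀ and 𝒢ₙ(x) = m for all n ≥ n₀. -/
open scoped Classical

universe u

/-- `PosP Γ n` is the set `Pₙ` of positions from which the second player can win
within `n` rounds: `P₀` is the set of terminal positions, and
`Pₙ₊₁ = {x : every option of x has an option in Pₙ}`. -/
def PosP {V : Type*} (Γ : V → Finset V) : ℕ → Set V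
  | 0 => {x | Γ x = ∅}
  | n + 1 => {x | ∀ y ∈ Γ x, ∃ z ∈ Γ y, z ∈ PosP Γ n}

/-- `PosN Γ n` is the set `Nₙ`: for `n ≥ 1`, `Nₙ = {x : some option of x lies in Pₙ₋₁}`. -/
def PosN {V : Type*} (Γ : V → Finset V) : ℕ → Set V
  | 0 => ∅
  | n + 1 => {x | ∃ y ∈ Γ x, y ∈ PosP Γ n}

/-- The P-positions `𝒫 = ⋃ₙ Pₙ` (second player wins). -/
def PPos {V : Type*} (Γ : V → Finset V) : Set V := ⋃ n, PosP Γ n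

/-- The N-positions `𝒩 = ⋃ₙ Nₙ` (first player wins). -/
def NPos {V : Type*} (Γ : V → Finset V) : Set V := ⋃ n, PosN Γ n

/-- The D-positions `𝒟 = V ∖ (𝒫 ∪ 𝒩)` (draws). -/
def DPos {V : Type*} (Γ : V → Finset V) : Set V := (PPos Γ ∪ NPos Γ)ᶜ

/-- The mex (least natural number not attained) of the values `g y`, `y ∈ s`. -/
noncomputable def mexF {V : Type*} (s : Finset V) (g : V → ℕ∞) : ℕ :=
  sInf {n : ℕ | ∀ y ∈ s, g y ≠ (n : ℕ∞)}

/-- The approximants `𝒢ₙ` of the extended Sprague-Grundy function. -/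
noncomputable def Gfun {V : Type*} (Γ : V → Finset V) : ℕ → V → ℕ∞
  | 0 => fun x => if Γ x = ∅ then 0 else ⊤
  | n + 1 => fun x =>
      let m := mexF (Γ x) (Gfun Γ n)
      if ∀ y ∈ Γ x, Gfun Γ n y ≤ (m : ℕ∞) ∨ ∃ z ∈ Γ y, Gfun Γ n z = (m : ℕ∞)
      then (m : ℕ∞) else ⊤

/-- `x` has finite rank with (finite) Sprague-Grundy value `m`:
`𝒢ₙ(x) = m` for all sufficiently large `n`. -/
def HasGVal {V : Type*} (Γ : V → Finset V) (x : V) (m : ℕ) : Prop :=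
  ∃ n₀ : ℕ, ∀ n ≥ n₀, Gfun Γ n x = (m : ℕ∞)

/-- `x` has infinite rank: `𝒢ₙ(x) = ∞` for all `n`. -/
def InfiniteRank {V : Type*} (Γ : V → Finset V) (x : V) : Prop :=
  ∀ n : ℕ, Gfun Γ n x = ⊤

/-- The rank of `x`: the least `n` with `𝒢ₙ(x) < ∞`, or `∞` if there is none. -/
noncomputable def rank {V : Type*} (Γ : V → Finset V) (x : V) : ℕ∞ :=
  sInf ((↑) '' {n : ℕ | Gfun Γ n x ≠ ⊤})

/-- For `x` of infinite rank, the set `𝒜` with `𝒢(x) = ∞(𝒜)`: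
the set of finite Sprague-Grundy values of finite-rank options of `x`. -/
def ValSet {V : Type*} (Γ : V → Finset V) (x : V) : Set ℕ :=
  {a | ∃ y ∈ Γ x, HasGVal Γ y a}

/-- The graph of the disjunctive sum: move in exactly one coordinate. -/
noncomputable def sumGraph {V W : Type*} (Γ : V → Finset V) (Δ : W → Finset W) :
    V × W → Finset (V × W) := fun p =>
  (Γ p.1).image (fun u => (u, p.2)) ∪ (Δ p.2).image (fun w => (p.1, w))

/-- Two (positions of possibly different) games lie in the same outcome class. -/
def SameOutcome {V W : Type*} (Γ : V → Finset V) (x : V) (Δ : W → Finset W) (y : W) : Prop :=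
  (x ∈ PPos Γ ↔ y ∈ PPos Δ) ∧ (x ∈ NPos Γ ↔ y ∈ NPos Δ) ∧ (x ∈ DPos Γ ↔ y ∈ DPos Δ)

/-- Equivalence of games: `G + X` and `H + X` have the same outcome for every
locally finite game `X`. -/
def GameEquiv {V W : Type*} (Γ : V → Finset V) (x : V) (Δ : W → Finset W) (y : W) : Prop :=
  ∀ (X : Type u) (Ξ : X → Finset X) (z : X),
    SameOutcome (sumGraph Γ Ξ) (x, z) (sumGraph Δ Ξ) (y, z)

/-- The nim heap `*m`: positions `0, …, m`, where from `k` one can move to any `j < k`. -/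
def nimGraph (m : ℕ) : Fin (m + 1) → Finset (Fin (m + 1)) :=
  fun k => Finset.univ.filter (fun j => j < k)

/-- The reduced graph `R(V)`: the induced graph on the complement of the P-positions. -/
noncomputable def reducedGraph {V : Type*} (Γ : V → Finset V) :
    {x : V // x ∉ PPos Γ} → Finset {x : V // x ∉ PPos Γ} := fun x =>
  (Γ x.1).subtype (fun y => y ∉ PPos Γ)

/-- The vertex set of `R^{(k)}(V)`: positions which do not have finite rank with
Sprague-Grundy value `< k`. -/
def RkSet {V : Type*} (Γ : V → Finset V) (k : ℕ) : Set V :=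
  {x | ¬ ∃ m < k, HasGVal Γ x m}

/-- The induced game graph `R^{(k)}(V)` on `RkSet Γ k`. -/
noncomputable def RkGraph {V : Type*} (Γ : V → Finset V) (k : ℕ) :
    RkSet Γ k → Finset (RkSet Γ k) := fun x =>
  (Γ x.1).subtype (fun y => y ∈ RkSet Γ k)

/-- `V` is `k`-stable: every infinite-rank position `x`, with `𝒢(x) = ∞(𝒜)`,
has `{0, 1, …, k} ⊆ 𝒜`. -/
def kStable {V : Type*} (Γ : V → Finset V) (k : ℕ) : Prop :=
  ∀ x, InfiniteRank Γ x → ∀ j ≤ k, j ∈ ValSet Γ x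

/-- `l` is a directed walk from `o` to `x` in the graph `Γ`. -/
def IsWalk {V : Type*} (Γ : V → Finset V) (o x : V) (l : List V) : Prop :=
  l.head? = some o ∧ l.getLast? = some x ∧ l.Chain' (fun a b => b ∈ Γ a)

/-- `Γ` is a tree with root `o`: `o` has no incoming arcs, and every vertex is
reached from `o` by a unique directed walk. -/
def IsTree {V : Type*} (Γ : V → Finset V) (o : V) : Prop :=
  (∀ x, o ∉ Γ x) ∧ ∀ x, ∃! l : List V, IsWalk Γ o x l

/-- `f` is a mex labelling: `f x` is the least natural number not attained by `f`
on the options of `x`, for every `x`. -/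
def MexLabelling {V : Type*} (Γ : V → Finset V) (f : V → ℕ) : Prop :=
  ∀ x, f x = sInf {n : ℕ | ∀ y ∈ Γ x, f y ≠ n}

lemma Gfun_succ {V : Type*} (Γ : V → Finset V) (n : ℕ) (x : V) :
    Gfun Γ (n + 1) x =
      if ∀ y ∈ Γ x, Gfun Γ n y ≤ (mexF (Γ x) (Gfun Γ n) : ℕ∞) ∨
          ∃ z ∈ Γ y, Gfun Γ n z = (mexF (Γ x) (Gfun Γ n) : ℕ∞)
      then (mexF (Γ x) (Gfun Γ n) : ℕ∞) else ⊤ := rfl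

lemma mexF_not_mem {V : Type*} (s : Finset V) (g : V → ℕ∞) :
    ∀ y ∈ s, g y ≠ (mexF s g : ℕ∞) := by
  have hne : {n : ℕ | ∀ y ∈ s, g y ≠ (n : ℕ∞)}.Nonempty := by
    refine ⟨(s.sup fun y => (g y).toNat) + 1, fun y hy h => ?_⟩
    have h1 : (g y).toNat ≤ s.sup fun y => (g y).toNat :=
      Finset.le_sup (f := fun y => (g y).toNat) hy
    rw [h] at h1
    simp only [ENat.toNat_coe] at h1
    omega
  exact Nat.sInf_mem hne

lemma mexF_lt_mem {V : Type*} (s : Finset V) (g : V → ℕ∞) {j : ℕ}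
    (hj : j < mexF s g) : ∃ y ∈ s, g y = (j : ℕ∞) := by
  by_contra h
  push_neg at h
  have : mexF s g ≤ j := Nat.sInf_le (fun y hy => h y hy)
  omega

lemma gfun_stab {V : Type*} (Γ : V → Finset V) :
    ∀ n (x : V), Gfun Γ n x ≠ ⊤ → Gfun Γ (n + 1) x = Gfun Γ n x := by
  intro n
  induction n with
  | zero =>
    intro x hx
    have hΓ : Γ x = ∅ := by
      by_contra h
      simp only [Gfun, if_neg h] at hx
      exact hx rfl
    have h0 : Gfun Γ 0 x = (0 : ℕ∞) := by simp [Gfun, hΓ]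
    have hm0 : mexF (Γ x) (Gfun Γ 0) = 0 := by
      apply Nat.sInf_eq_zero.2
      left
      intro y hy
      simp [hΓ] at hy
    rw [Gfun_succ, h0, hm0, if_pos]
    · rfl
    · intro y hy
      simp [hΓ] at hy
  | succ n ih =>
    intro x hx
    set m := mexF (Γ x) (Gfun Γ n) with hm
    have hcond : ∀ y ∈ Γ x, Gfun Γ n y ≤ (m : ℕ∞) ∨
        ∃ z ∈ Γ y, Gfun Γ n z = (m : ℕ∞) := by
      by_contra h
      rw [Gfun_succ, ← hm, if_neg h] at hx
      exact hx rfl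
    have hval : Gfun Γ (n + 1) x = (m : ℕ∞) := by
      rw [Gfun_succ, ← hm, if_pos hcond]
    have hpres : ∀ y ∈ Γ x, Gfun Γ n y ≤ (m : ℕ∞) → Gfun Γ (n + 1) y = Gfun Γ n y := by
      intro y hy hle
      exact ih y (fun ht => by simp [ht] at hle)
    have hnotm : ∀ y ∈ Γ x, Gfun Γ (n + 1) y ≠ (m : ℕ∞) := by
      intro y hy
      rcases hcond y hy with hle | ⟨z, hz, hzm⟩
      · rw [hpres y hy hle]
        exact mexF_not_mem _ _ y hy
      · have hmexne : mexF (Γ y) (Gfun Γ n) ≠ m := by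
          intro he
          exact mexF_not_mem (Γ y) (Gfun Γ n) z hz (he ▸ hzm)
        rw [Gfun_succ]
        split
        · intro habs
          exact hmexne (by exact_mod_cast habs)
        · simp
    have hmex' : mexF (Γ x) (Gfun Γ (n + 1)) = m := by
      show sInf {k : ℕ | ∀ y ∈ Γ x, Gfun Γ (n + 1) y ≠ (k : ℕ∞)} = m
      apply le_antisymm
      · exact Nat.sInf_le hnotm
      · apply le_csInf
          ⟨m, show m ∈ {k : ℕ | ∀ y ∈ Γ x, Gfun Γ (n + 1) y ≠ (k : ℕ∞)} from hnotm⟩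
        intro b hb
        by_contra hlt
        push_neg at hlt
        obtain ⟨y, hy, hyb⟩ := mexF_lt_mem (Γ x) (Gfun Γ n) hlt
        have : Gfun Γ (n + 1) y = (b : ℕ∞) := by
          rw [hpres y hy (by rw [hyb]; exact_mod_cast hlt.le), hyb]
        exact hb y hy this
    have hcond' : ∀ y ∈ Γ x, Gfun Γ (n + 1) y ≤ (m : ℕ∞) ∨
        ∃ z ∈ Γ y, Gfun Γ (n + 1) z = (m : ℕ∞) := by
      intro y hy
      rcases hcond y hy with hle | ⟨z, hz, hzm⟩
      · left; rw [hpres y hy hle]; exact hle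
      · right
        refine ⟨z, hz, ?_⟩
        rw [ih z (fun ht => by simp [ht] at hzm), hzm]
    rw [hval, Gfun_succ, hmex', if_pos hcond']

/-- for each `x`, either `𝒢ₙ(x) = ∞` for all `n`, or there are
`m, n₀` with `𝒢ₙ(x) = ∞` for `n < n₀` and `𝒢ₙ(x) = m` for `n ≥ n₀`. -/
theorem stmt1 {V : Type*} (Γ : V → Finset V) (x : V) :
    (∀ n : ℕ, Gfun Γ n x = ⊤) ∨
    ∃ (m n₀ : ℕ), (∀ n < n₀, Gfun Γ n x = ⊤) ∧ ∀ n ≥ n₀, Gfun Γ n x = (m : ℕ∞) := by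
  by_cases h : ∀ n, Gfun Γ n x = ⊤
  · exact Or.inl h
  · right
    push_neg at h
    have hex : ∃ n, Gfun Γ n x ≠ ⊤ := h
    obtain ⟨m, hm⟩ : ∃ m : ℕ, Gfun Γ (Nat.find hex) x = (m : ℕ∞) := by
      have := Nat.find_spec hex
      lift Gfun Γ (Nat.find hex) x to ℕ using this with k
      exact ⟨k, rfl⟩
    refine ⟨m, Nat.find hex, fun n hn => ?_, fun n hn => ?_⟩
    · have := Nat.find_min hex hn
      simpa using this
    · obtain ⟨k, rfl⟩ : ∃ k, n = Nat.find hex + k := ⟨n - Nat.find hex, by omega⟩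
      clear hn
      induction k with
      | zero => simpa using hm
      | succ k ih =>
        rw [show Nat.find hex + (k + 1) = (Nat.find hex + k) + 1 by omega,
          gfun_stab Γ _ x (by rw [ih]; simp), ih]
end

section
/- Let V be a locally finite game graph and x ∈ V. Then: (a) 𝒢(x) = 0 if and only if x is a P-position; (b) if 𝒢(x) is a positive integer, then x is an N-position; (c) if 𝒢(x) = ∞(𝒜) for a set 𝒜 with 0 ∈ 𝒜, then x is an N-position; (d) 𝒢(x) = ∞(𝒜) for some 𝒜 with 0 ∉ 𝒜 if and only if x is a D-position. -/
open scoped Classical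

universe u

section Aux

variable {V : Type*}

lemma mem_posP_succ {Γ : V → Finset V} {n : ℕ} {x : V} :
    x ∈ PosP Γ (n + 1) ↔ ∀ y ∈ Γ x, ∃ z ∈ Γ y, z ∈ PosP Γ n := Iff.rfl

lemma mem_posN_succ {Γ : V → Finset V} {n : ℕ} {x : V} :
    x ∈ PosN Γ (n + 1) ↔ ∃ y ∈ Γ x, y ∈ PosP Γ n := Iff.rfl

lemma posP_mono (Γ : V → Finset V) : ∀ n, PosP Γ n ⊆ PosP Γ (n + 1) := by
  intro n
  induction n with
  | zero =>
    intro x hx y hy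
    have hx' : Γ x = ∅ := hx
    simp [hx'] at hy
  | succ n ih =>
    intro x hx y hy
    obtain ⟨z, hz, hzP⟩ := hx y hy
    exact ⟨z, hz, ih hzP⟩

lemma posP_le (Γ : V → Finset V) {n m : ℕ} (h : n ≤ m) : PosP Γ n ⊆ PosP Γ m := by
  induction m with
  | zero => simp [Nat.le_zero.mp h]
  | succ m ih =>
    rcases Nat.lt_or_ge n (m + 1) with h' | h'
    · exact subset_trans (ih (Nat.lt_succ_iff.mp h')) (posP_mono Γ m)
    · have : n = m + 1 := le_antisymm h h'
      simp [this]

lemma disjAux (Γ : V → Finset V) :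
    ∀ s n m (x : V), n + m ≤ s → x ∈ PosP Γ n → x ∈ PosN Γ m → False := by
  intro s
  induction s with
  | zero =>
    intro n m x h hP hN
    have hm : m = 0 := by omega
    subst hm
    exact hN
  | succ s ih =>
    intro n m x h hP hN
    match m with
    | 0 => exact hN
    | k + 1 =>
      obtain ⟨y, hy, hyP⟩ := hN
      match n with
      | 0 =>
        have hx' : Γ x = ∅ := hP
        simp [hx'] at hy
      | j + 1 =>
        obtain ⟨z, hz, hzP⟩ := hP y hy
        exact ih k (j + 1) y (by omega) hyP ⟨z, hz, hzP⟩

lemma mexSet_nonempty (s : Finset V) (g : V → ℕ∞) :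
    {n : ℕ | ∀ y ∈ s, g y ≠ (n : ℕ∞)}.Nonempty := by
  have hinj : Function.Injective ((↑) : ℕ → ℕ∞) := fun a b h => by exact_mod_cast h
  have hfin : {n : ℕ | (n : ℕ∞) ∈ s.image g}.Finite := by
    have := Set.Finite.preimage hinj.injOn (s.image g).finite_toSet
    simpa [Set.preimage] using this
  obtain ⟨n, hn⟩ := hfin.infinite_compl.nonempty
  refine ⟨n, fun y hy hgy => hn ?_⟩
  exact Finset.mem_image.mpr ⟨y, hy, hgy⟩

lemma mexF_spec (s : Finset V) (g : V → ℕ∞) :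
    ∀ y ∈ s, g y ≠ (mexF s g : ℕ∞) :=
  Nat.sInf_mem (mexSet_nonempty s g)

lemma mexF_min {s : Finset V} {g : V → ℕ∞} {k : ℕ} (h : k < mexF s g) :
    ∃ y ∈ s, g y = (k : ℕ∞) := by
  have := Nat.notMem_of_lt_sInf h
  simpa [Set.mem_setOf_eq, not_forall] using this

lemma gfun_succ (Γ : V → Finset V) (n : ℕ) (x : V) :
    Gfun Γ (n + 1) x =
      if ∀ y ∈ Γ x, Gfun Γ n y ≤ (mexF (Γ x) (Gfun Γ n) : ℕ∞) ∨
          ∃ z ∈ Γ y, Gfun Γ n z = (mexF (Γ x) (Gfun Γ n) : ℕ∞)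
      then (mexF (Γ x) (Gfun Γ n) : ℕ∞) else ⊤ := rfl

lemma gfun_zero_iff (Γ : V → Finset V) : ∀ n (x : V), Gfun Γ n x = 0 ↔ x ∈ PosP Γ n := by
  intro n
  induction n with
  | zero =>
    intro x
    constructor
    · intro h
      by_contra hx
      have : Γ x ≠ ∅ := hx
      simp [Gfun, this] at h
    · intro hx
      have hx' : Γ x = ∅ := hx
      simp [Gfun, hx']
  | succ n ih =>
    intro x
    constructor
    · intro h
      rw [gfun_succ] at h
      split_ifs at h with hc
      · have hm : mexF (Γ x) (Gfun Γ n) = 0 := by exact_mod_cast h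
        intro y hy
        rcases hc y hy with h1 | ⟨z, hz, hz0⟩
        · exfalso
          have : Gfun Γ n y = 0 := le_antisymm (by simpa [hm] using h1) zero_le
          exact mexF_spec (Γ x) (Gfun Γ n) y hy (by simpa [hm] using this)
        · exact ⟨z, hz, (ih z).mp (by simpa [hm] using hz0)⟩
      · simp at h
    · intro hx
      have h0 : ∀ y ∈ Γ x, Gfun Γ n y ≠ 0 := by
        intro y hy hy0
        have hyP : y ∈ PosP Γ n := (ih y).mp hy0
        obtain ⟨z, hz, hzP⟩ := hx y hy
        exact disjAux Γ (n + (n + 1)) n (n + 1) y le_rfl hyP ⟨z, hz, hzP⟩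
      have hm : mexF (Γ x) (Gfun Γ n) = 0 := by
        have h0' : (0 : ℕ) ∈ {k : ℕ | ∀ y ∈ Γ x, Gfun Γ n y ≠ (k : ℕ∞)} := by
          simpa using h0
        exact Nat.le_zero.mp (Nat.sInf_le h0')
      rw [gfun_succ, hm]
      rw [if_pos]
      · simp
      · intro y hy
        obtain ⟨z, hz, hzP⟩ := hx y hy
        exact Or.inr ⟨z, hz, by simpa using (ih z).mpr hzP⟩

lemma hasGVal_zero_iff_ppos (Γ : V → Finset V) (x : V) :
    HasGVal Γ x 0 ↔ x ∈ PPos Γ := by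
  constructor
  · rintro ⟨n₀, hn⟩
    have : Gfun Γ n₀ x = 0 := by simpa using hn n₀ le_rfl
    exact Set.mem_iUnion.mpr ⟨n₀, (gfun_zero_iff Γ n₀ x).mp this⟩
  · intro hx
    obtain ⟨n, hn⟩ := Set.mem_iUnion.mp hx
    exact ⟨n, fun m hm => by
      simpa using (gfun_zero_iff Γ m x).mpr (posP_le Γ hm hn)⟩

lemma npos_of_pos_gfun (Γ : V → Finset V) {n : ℕ} {x : V} {m : ℕ} (hm : 0 < m)
    (h : Gfun Γ (n + 1) x = (m : ℕ∞)) : x ∈ NPos Γ := by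
  rw [gfun_succ] at h
  split_ifs at h with hc
  · have hmex : mexF (Γ x) (Gfun Γ n) = m := by exact_mod_cast h
    obtain ⟨y, hy, hy0⟩ : ∃ y ∈ Γ x, Gfun Γ n y = ((0 : ℕ) : ℕ∞) :=
      mexF_min (by omega)
    have hyP : y ∈ PosP Γ n := (gfun_zero_iff Γ n y).mp (by simpa using hy0)
    exact Set.mem_iUnion.mpr ⟨n + 1, ⟨y, hy, hyP⟩⟩
  · exfalso
    have : (m : ℕ∞) = ⊤ := h.symm
    simp at this

lemma mem_union_of_finite_gfun (Γ : V → Finset V) {n : ℕ} {x : V}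
    (h : Gfun Γ n x ≠ ⊤) : x ∈ PPos Γ ∪ NPos Γ := by
  match n with
  | 0 =>
    have hx : Γ x = ∅ := by
      by_contra hne
      simp [Gfun, hne] at h
    exact Or.inl (Set.mem_iUnion.mpr ⟨0, hx⟩)
  | n + 1 =>
    rw [gfun_succ] at h
    split_ifs at h with hc
    · have hval : Gfun Γ (n + 1) x = ((mexF (Γ x) (Gfun Γ n) : ℕ) : ℕ∞) := by
        rw [gfun_succ, if_pos hc]
      rcases Nat.eq_zero_or_pos (mexF (Γ x) (Gfun Γ n)) with h0 | hpos
      · rw [h0] at hval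
        simp only [Nat.cast_zero] at hval
        exact Or.inl (Set.mem_iUnion.mpr ⟨n + 1, (gfun_zero_iff Γ (n + 1) x).mp hval⟩)
      · exact Or.inr (npos_of_pos_gfun Γ hpos hval)
    · exact absurd rfl h

end Aux

/-- (a) `𝒢(x) = 0` iff `x ∈ 𝒫`; (b) if `𝒢(x)` is a positive
integer then `x ∈ 𝒩`; (c) if `𝒢(x) = ∞(𝒜)` with `0 ∈ 𝒜` then `x ∈ 𝒩`;
(d) `𝒢(x) = ∞(𝒜)` with `0 ∉ 𝒜` iff `x ∈ 𝒟`. -/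
theorem stmt2 {V : Type*} (Γ : V → Finset V) (x : V) :
    (HasGVal Γ x 0 ↔ x ∈ PPos Γ) ∧
    (∀ m : ℕ, 0 < m → HasGVal Γ x m → x ∈ NPos Γ) ∧
    (InfiniteRank Γ x → 0 ∈ ValSet Γ x → x ∈ NPos Γ) ∧
    ((InfiniteRank Γ x ∧ 0 ∉ ValSet Γ x) ↔ x ∈ DPos Γ) := by
  refine ⟨hasGVal_zero_iff_ppos Γ x, ?_, ?_, ?_⟩
  · rintro m hm ⟨n₀, hn⟩
    exact npos_of_pos_gfun Γ hm (hn (n₀ + 1) (Nat.le_succ n₀))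
  · rintro _ ⟨y, hy, hval⟩
    obtain ⟨n, hn⟩ := Set.mem_iUnion.mp ((hasGVal_zero_iff_ppos Γ y).mp hval)
    exact Set.mem_iUnion.mpr ⟨n + 1, ⟨y, hy, hn⟩⟩
  · constructor
    · rintro ⟨hInf, hval⟩
      intro hmem
      rcases hmem with hP | hN
      · obtain ⟨n, hn⟩ := Set.mem_iUnion.mp hP
        have := (gfun_zero_iff Γ n x).mpr hn
        rw [hInf n] at this
        simp at this
      · obtain ⟨m, hm⟩ := Set.mem_iUnion.mp hN
        match m with
        | 0 => exact hm
        | k + 1 =>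
          obtain ⟨y, hy, hyP⟩ := hm
          exact hval ⟨y, hy, (hasGVal_zero_iff_ppos Γ y).mpr
            (Set.mem_iUnion.mpr ⟨k, hyP⟩)⟩
    · intro hD
      constructor
      · intro n
        by_contra h
        exact hD (mem_union_of_finite_gfun Γ h)
      · rintro ⟨y, hy, hval⟩
        obtain ⟨n, hn⟩ := Set.mem_iUnion.mp ((hasGVal_zero_iff_ppos Γ y).mp hval)
        exact hD (Or.inr (Set.mem_iUnion.mpr ⟨n + 1, ⟨y, hy, hn⟩⟩))
end
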